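/- Let Q ⊆ ℝ² be a compact convex set with μ(Q) > 0, let W ⊆ Q be a finite nonempty set with |W| = n, and suppose every Voronoi cell C(w), w ∈ W, is point symmetric about some point. If there exists w ∈ W such that C(w) is not point symmetric about w itself (i.e., some q satisfies q ∈ C(w) but 2w − q ∉ C(w)), then there exists a finite set B ⊆ Q with |B| = n such that μ({q ∈ Q : infDist(q, B) < infDist(q, W)}) > μ(Q)/2. (If Wilma's points are not all at the symmetry centers of their cells, Barney wins.) -/

import Mathlib

open MeasureTheory Metric Set
open scoped ENNReal RealInnerProductSpace

local notation "E2" => EuclideanSpace ℝ (Fin 2)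

/-- The Voronoi cell of `w` in the board `Q` with respect to the site set `W`:
the points of `Q` at least as close to `w` as to every other site. -/
def cell (Q W : Set (EuclideanSpace ℝ (Fin 2))) (w : EuclideanSpace ℝ (Fin 2)) :
    Set (EuclideanSpace ℝ (Fin 2)) :=
  {q | q ∈ Q ∧ ∀ w' ∈ W, dist q w ≤ dist q w'}

/-- A set `C` is point symmetric about `c` if it is invariant under the point
reflection `q ↦ 2c − q`. -/
def PointSymmetricAbout (C : Set (EuclideanSpace ℝ (Fin 2)))
    (c : EuclideanSpace ℝ (Fin 2)) : Prop :=
  ∀ q, q ∈ C ↔ (2 : ℝ) • c - q ∈ C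

lemma dist_lt_dist_iff_inner (q w b : E2) :
    dist q b < dist q w ↔ 0 < ⟪b - w, (2:ℝ) • q - b - w⟫ := by
  rw [dist_eq_norm, dist_eq_norm, ← pow_lt_pow_iff_left₀ (norm_nonneg _) (norm_nonneg _) two_ne_zero,
    norm_sub_sq_real, norm_sub_sq_real]
  simp only [inner_sub_left, inner_sub_right, real_inner_smul_right, real_inner_self_eq_norm_sq]
  constructor <;> intro h <;> nlinarith [real_inner_comm q b, real_inner_comm q w, real_inner_comm b w]

lemma dist_le_dist_iff_inner (q w b : E2) :
    dist q w ≤ dist q b ↔ ⟪b - w, (2:ℝ) • q - b - w⟫ ≤ 0 := by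
  rw [← not_lt, dist_lt_dist_iff_inner, not_lt]

lemma cell_subset (Q W : Set E2) (w : E2) : cell Q W w ⊆ Q := fun _ hq => hq.1

lemma mem_cell_self {Q W : Set E2} {w : E2} (hWQ : W ⊆ Q) (hw : w ∈ W) : w ∈ cell Q W w :=
  ⟨hWQ hw, fun w' _ => by rw [dist_self]; exact dist_nonneg⟩

lemma isClosed_cell {Q : Set E2} (hQ : IsClosed Q) (W : Set E2) (w : E2) :
    IsClosed (cell Q W w) := by
  have h : cell Q W w = Q ∩ ⋂ w' ∈ W, {q : E2 | dist q w ≤ dist q w'} := by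
    ext q; simp [cell]
  rw [h]
  exact hQ.inter (isClosed_biInter fun w' _ =>
    isClosed_le (continuous_id.dist continuous_const) (continuous_id.dist continuous_const))

lemma convex_cell {Q : Set E2} (hQ : Convex ℝ Q) (W : Set E2) (w : E2) :
    Convex ℝ (cell Q W w) := by
  have h : cell Q W w = Q ∩ ⋂ w' ∈ W, {q : E2 | dist q w ≤ dist q w'} := by
    ext q; simp [cell]
  rw [h]
  refine hQ.inter (convex_iInter fun w' => convex_iInter fun _ => ?_)
  have h2 : {q : E2 | dist q w ≤ dist q w'} =
      {q : E2 | ⟪w' - w, q⟫ ≤ ⟪w' - w, w' + w⟫ / 2} := by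
    ext q
    rw [mem_setOf_eq, mem_setOf_eq, dist_le_dist_iff_inner]
    have e1 : ⟪w' - w, (2:ℝ) • q - w' - w⟫ =
        2 * ⟪w' - w, q⟫ - ⟪w' - w, w' + w⟫ := by
      simp only [inner_sub_right, inner_add_right, real_inner_smul_right]; ring
    rw [e1]
    constructor <;> intro h <;> linarith
  rw [h2]
  exact convex_halfSpace_le ⟨fun x y => inner_add_right _ _ _,
    fun c x => real_inner_smul_right _ _ _⟩ _

lemma infDist_eq_of_mem_cell {Q W : Set E2} {w q : E2} (hWne : W.Nonempty)
    (hw : w ∈ W) (hq : q ∈ cell Q W w) : infDist q W = dist q w := by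
  refine le_antisymm (infDist_le_dist_of_mem hw) ?_
  by_contra h
  push_neg at h
  obtain ⟨y, hy, hylt⟩ := (infDist_lt_iff hWne).mp h
  exact absurd (hq.2 y hy) (not_le.mpr hylt)

lemma cover_cells {Q W : Set E2} (hWfin : W.Finite) (hWne : W.Nonempty) :
    Q ⊆ ⋃ w ∈ W, cell Q W w := by
  intro q hq
  obtain ⟨w, hw, hmin⟩ := Set.exists_min_image W (fun w => dist q w) hWfin hWne
  exact mem_biUnion hw ⟨hq, fun w' hw' => hmin w' hw'⟩

lemma hyperplane_null (v : E2) (hv : v ≠ 0) (a : ℝ) :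
    volume {q : E2 | ⟪v, q⟫ = a} = 0 := by
  set q0 : E2 := (a / ‖v‖^2) • v with hq0
  have hq0v : ⟪v, q0⟫ = a := by
    rw [hq0, real_inner_smul_right, real_inner_self_eq_norm_sq]
    rw [div_mul_eq_mul_div, mul_div_assoc, div_self (pow_ne_zero 2 (norm_ne_zero_iff.mpr hv)), mul_one]
  have hset : {q : E2 | ⟪v, q⟫ = a} = (fun q => q - q0) ⁻¹' ((ℝ ∙ v)ᗮ : Set E2) := by
    ext q
    simp only [mem_setOf_eq, mem_preimage, SetLike.mem_coe,
      Submodule.mem_orthogonal_singleton_iff_inner_right, inner_sub_right, hq0v]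
    constructor <;> intro h <;> linarith
  have hker : (ℝ ∙ v)ᗮ ≠ (⊤ : Submodule ℝ E2) := by
    intro h
    have : ⟪v, v⟫ = (0:ℝ) := by
      have hv' : v ∈ (ℝ ∙ v)ᗮ := h ▸ Submodule.mem_top
      exact (Submodule.mem_orthogonal_singleton_iff_inner_right).mp hv'
    exact hv (inner_self_eq_zero.mp this)
  have hnull : volume ((ℝ ∙ v)ᗮ : Set E2) = 0 :=
    Measure.addHaar_submodule volume _ hker
  rw [hset]
  have hmp : MeasurePreserving (fun q : E2 => q - q0) volume volume :=
    measurePreserving_sub_right volume q0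
  rw [hmp.measure_preimage (NullMeasurableSet.of_null hnull)]
  exact hnull

lemma interior_nonempty_of_measure_pos {s : Set E2} (hconv : Convex ℝ s)
    (h : 0 < volume s) : (interior s).Nonempty := by
  by_contra h'
  rw [Set.not_nonempty_iff_eq_empty] at h'
  have hspan : affineSpan ℝ s ≠ ⊤ := by
    intro htop
    rw [← hconv.interior_nonempty_iff_affineSpan_eq_top] at htop
    exact (Set.not_nonempty_iff_eq_empty.mpr h') htop
  have : volume s ≤ volume (affineSpan ℝ s : Set E2) :=
    measure_mono (subset_affineSpan ℝ s)
  rw [Measure.addHaar_affineSubspace volume _ hspan] at this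
  exact absurd (le_antisymm this zero_le) (ne_of_gt h)

/-- center of symmetry lies in the interior, provided interior is nonempty -/
lemma center_mem_interior {C : Set E2} (hC : Convex ℝ C) {c : E2}
    (hsym : PointSymmetricAbout C c) (hne : (interior C).Nonempty) :
    c ∈ interior C := by
  obtain ⟨x, hx⟩ := hne
  have hx' : (2:ℝ) • c - x ∈ C := (hsym x).mp (interior_subset hx)
  have hmem : c ∈ openSegment ℝ x ((2:ℝ) • c - x) := by
    exact ⟨1/2, 1/2, by norm_num, by norm_num, by norm_num, by module⟩
  exact hC.openSegment_interior_self_subset_interior hx hx' hmem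

lemma exists_sep_radius {W : Set E2} (hWfin : W.Finite) (w : E2) :
    ∃ r > (0:ℝ), ∀ w' ∈ W, w' ≠ w → 2 * r ≤ dist w w' := by
  rcases Set.eq_empty_or_nonempty (W \ {w}) with hD | hD
  · exact ⟨1, one_pos, fun w' hw' hne => absurd (Set.mem_diff_singleton.mpr ⟨hw', hne⟩)
      (hD ▸ Set.notMem_empty w')⟩
  · obtain ⟨w₁, hw₁, hmin⟩ := Set.exists_min_image (W \ {w}) (fun w' => dist w w')
      hWfin.diff hD
    refine ⟨dist w w₁ / 2, by
      have : w₁ ≠ w := hw₁.2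
      have := dist_pos.mpr (Ne.symm this)
      linarith, fun w' hw' hne => ?_⟩
    have := hmin w' (Set.mem_diff_singleton.mpr ⟨hw', hne⟩)
    linarith

lemma ball_inter_subset_cell {Q W : Set E2} {w : E2} {r : ℝ}
    (hr : ∀ w' ∈ W, w' ≠ w → 2 * r ≤ dist w w') :
    ball w r ∩ Q ⊆ cell Q W w := by
  rintro q ⟨hqb, hqQ⟩
  refine ⟨hqQ, fun w' hw' => ?_⟩
  rcases eq_or_ne w' w with rfl | hne
  · exact le_refl _
  · have h1 : dist q w < r := mem_ball.mp hqb
    have h2 : 2 * r ≤ dist w w' := hr w' hw' hne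
    have h3 : dist w w' ≤ dist w q + dist q w' := dist_triangle _ _ _
    rw [dist_comm w q] at h3
    linarith

lemma measure_cell_pos {Q W : Set E2} (hQconv : Convex ℝ Q) (hQvol : 0 < volume Q)
    (hWfin : W.Finite) {w : E2} (hwQ : w ∈ Q) :
    0 < volume (cell Q W w) := by
  obtain ⟨r, hr0, hr⟩ := exists_sep_radius hWfin w
  obtain ⟨z, hz⟩ := interior_nonempty_of_measure_pos hQconv hQvol
  obtain ⟨ρ, hρ0, hρ⟩ := Metric.isOpen_iff.mp isOpen_interior z hz
  set d := dist z w with hd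
  have hd0 : 0 ≤ d := dist_nonneg
  set t : ℝ := min (1/2) (r / (2 * (d + ρ + 1))) with ht
  have hden : 0 < d + ρ + 1 := by linarith
  have ht0 : 0 < t := lt_min (by norm_num) (by positivity)
  have hthalf : t ≤ 1/2 := min_le_left _ _
  have htle : t ≤ r / (2 * (d + ρ + 1)) := min_le_right _ _
  have ht1 : t * (d + ρ + 1) ≤ r / 2 := by
    have h2 : t * (d + ρ + 1) ≤ (r / (2 * (d + ρ + 1))) * (d + ρ + 1) :=
      mul_le_mul_of_nonneg_right htle (le_of_lt hden)
    have h3 : (r / (2 * (d + ρ + 1))) * (d + ρ + 1) = r / 2 := by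
      field_simp
    linarith
  have htd : t * d + t * ρ < r := by nlinarith
  set p : E2 := w + t • (z - w) with hp
  have hpw : dist p w = t * d := by
    rw [hp, dist_eq_norm, add_sub_cancel_left, norm_smul, Real.norm_eq_abs,
      abs_of_pos ht0, hd, dist_eq_norm]
  have hball : ball p (t * ρ) ⊆ cell Q W w := by
    refine subset_trans ?_ (ball_inter_subset_cell hr)
    intro x hx
    have hxp : dist x p < t * ρ := mem_ball.mp hx
    constructor
    · -- x ∈ ball w r
      have : dist x w ≤ dist x p + dist p w := dist_triangle _ _ _
      rw [mem_ball]
      rw [hpw] at this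
      nlinarith
    · -- x ∈ Q
      set y : E2 := z + t⁻¹ • (x - p) with hy
      have hyz : dist y z < ρ := by
        rw [hy, dist_eq_norm, add_sub_cancel_left, norm_smul, Real.norm_eq_abs,
          abs_of_pos (inv_pos.mpr ht0)]
        rw [dist_eq_norm] at hxp
        calc t⁻¹ * ‖x - p‖ < t⁻¹ * (t * ρ) := by
              exact mul_lt_mul_of_pos_left hxp (inv_pos.mpr ht0)
          _ = ρ := by field_simp
      have hyQ : y ∈ Q := interior_subset (hρ (mem_ball.mpr hyz))
      have hxcomb : x = (1 - t) • w + t • y := by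
        have h1 : t • y = t • z + (x - p) := by
          rw [hy, smul_add, smul_smul, mul_inv_cancel₀ (ne_of_gt ht0), one_smul]
        rw [h1, hp]
        module
      rw [hxcomb]
      exact hQconv hwQ hyQ (by linarith : (0:ℝ) ≤ 1 - t)
        (le_of_lt ht0) (by ring)
  calc (0:ℝ≥0∞) < volume (ball p (t * ρ)) := measure_ball_pos volume p (by positivity)
    _ ≤ volume (cell Q W w) := measure_mono hball

lemma eq_of_mem_interior_cells {Q W : Set E2} {w w' : E2} (hw : w ∈ W) (hw' : w' ∈ W)
    {q : E2} (hq : q ∈ interior (cell Q W w)) (hq' : q ∈ interior (cell Q W w')) : w = w' := by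
  by_contra hne
  have hqw : q ∈ cell Q W w := interior_subset hq
  have hqw' : q ∈ cell Q W w' := interior_subset hq'
  have heq : dist q w = dist q w' := le_antisymm (hqw.2 w' hw') (hqw'.2 w hw)
  have h1 : ⟪w' - w, (2:ℝ) • q - w' - w⟫ ≤ 0 := (dist_le_dist_iff_inner q w w').mp (le_of_eq heq)
  have h2 : ⟪w - w', (2:ℝ) • q - w - w'⟫ ≤ 0 := (dist_le_dist_iff_inner q w' w).mp (le_of_eq heq.symm)
  have he : ⟪w - w', (2:ℝ) • q - w - w'⟫ = -⟪w' - w, (2:ℝ) • q - w' - w⟫ := by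
    simp only [inner_sub_left, inner_sub_right, real_inner_smul_right]
    have := real_inner_comm w w'
    ring_nf
  have hI : ⟪w' - w, (2:ℝ) • q - w' - w⟫ = 0 := by linarith
  set dvec : E2 := w' - w with hdvec
  have hd0 : dvec ≠ 0 := sub_ne_zero.mpr (Ne.symm hne)
  have hnd : 0 < ‖dvec‖ := norm_pos_iff.mpr hd0
  obtain ⟨ε, hε0, hball⟩ := Metric.isOpen_iff.mp isOpen_interior q hq
  set δ : ℝ := ε / (2 * ‖dvec‖) with hδ
  have hδ0 : 0 < δ := by positivity
  set q' : E2 := q + δ • dvec with hq'def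
  have hq'ball : q' ∈ ball q ε := by
    rw [mem_ball, hq'def, dist_eq_norm, add_sub_cancel_left, norm_smul, Real.norm_eq_abs,
      abs_of_pos hδ0, hδ]
    rw [div_mul_eq_mul_div, mul_comm]
    rw [div_lt_iff₀ (by positivity : (0:ℝ) < 2 * ‖dvec‖)]
    nlinarith
  have hq'cell : q' ∈ cell Q W w := interior_subset (hball hq'ball)
  have hle : dist q' w ≤ dist q' w' := hq'cell.2 w' hw'
  have hlt : dist q' w' < dist q' w := by
    rw [dist_lt_dist_iff_inner]
    have hexp : ⟪w' - w, (2:ℝ) • q' - w' - w⟫ =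
        ⟪w' - w, (2:ℝ) • q - w' - w⟫ + (2*δ) * ⟪dvec, dvec⟫ := by
      have : (2:ℝ) • q' - w' - w = ((2:ℝ) • q - w' - w) + (2*δ) • dvec := by
        rw [hq'def]; module
      rw [this, inner_add_right, real_inner_smul_right, hdvec]
    rw [hexp, hI, real_inner_self_eq_norm_sq]
    have : 0 < 2 * δ * ‖dvec‖^2 := by positivity
    linarith
  exact absurd hle (not_le.mpr hlt)

lemma half_measure {C : Set E2} (hCm : MeasurableSet C) (hCfin : volume C ≠ ⊤) {c v : E2}
    (hv : v ≠ 0) (hsym : PointSymmetricAbout C c) :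
    volume (C ∩ {q | 0 < ⟪v, q - c⟫}) * 2 = volume C := by
  set φ := fun q : E2 => (2:ℝ) • c - q with hφ
  have key : ∀ q : E2, ⟪v, φ q - c⟫ = -⟪v, q - c⟫ := by
    intro q
    have h1 : φ q - c = -(q - c) := by rw [hφ]; simp only; module
    rw [h1, inner_neg_right]
  have hopen : IsOpen {q : E2 | 0 < ⟪v, q - c⟫} :=
    isOpen_lt continuous_const ((continuous_const.inner (continuous_id.sub continuous_const)))
  have hopen' : IsOpen {q : E2 | ⟪v, q - c⟫ < 0} :=
    isOpen_lt ((continuous_const.inner (continuous_id.sub continuous_const))) continuous_const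
  have hpre : φ ⁻¹' (C ∩ {q | 0 < ⟪v, q - c⟫}) = C ∩ {q | ⟪v, q - c⟫ < 0} := by
    ext q
    simp only [mem_preimage, mem_inter_iff, mem_setOf_eq, key q]
    constructor
    · rintro ⟨h1, h2⟩
      exact ⟨(hsym q).mpr h1, by linarith⟩
    · rintro ⟨h1, h2⟩
      exact ⟨(hsym q).mp h1, by linarith⟩
  have hmp : MeasurePreserving φ volume volume := Measure.measurePreserving_sub_left volume ((2:ℝ) • c)
  have hswap : volume (C ∩ {q | ⟪v, q - c⟫ < 0}) = volume (C ∩ {q | 0 < ⟪v, q - c⟫}) := by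
    rw [← hpre, hmp.measure_preimage (hCm.inter hopen.measurableSet).nullMeasurableSet]
  have hnull : volume (C ∩ {q | ⟪v, q - c⟫ = 0}) = 0 := by
    refine measure_mono_null ?_ (hyperplane_null v hv ⟪v, c⟫)
    rintro q ⟨_, hq2⟩
    simp only [mem_setOf_eq] at hq2 ⊢
    rw [inner_sub_right] at hq2
    linarith
  have hsub : volume C ≤ volume (C ∩ {q | 0 < ⟪v, q - c⟫}) + volume (C ∩ {q | ⟪v, q - c⟫ < 0}) := by
    have hcover : C ⊆ (C ∩ {q | 0 < ⟪v, q - c⟫}) ∪ (C ∩ {q | ⟪v, q - c⟫ < 0}) ∪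
        (C ∩ {q | ⟪v, q - c⟫ = 0}) := by
      intro q hq
      rcases lt_trichotomy (⟪v, q - c⟫ : ℝ) 0 with h | h | h
      · exact Or.inl (Or.inr ⟨hq, h⟩)
      · exact Or.inr ⟨hq, h⟩
      · exact Or.inl (Or.inl ⟨hq, h⟩)
    calc volume C ≤ volume ((C ∩ {q | 0 < ⟪v, q - c⟫}) ∪ (C ∩ {q | ⟪v, q - c⟫ < 0}) ∪
        (C ∩ {q | ⟪v, q - c⟫ = 0})) := measure_mono hcover
      _ ≤ volume ((C ∩ {q | 0 < ⟪v, q - c⟫}) ∪ (C ∩ {q | ⟪v, q - c⟫ < 0})) +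
          volume (C ∩ {q | ⟪v, q - c⟫ = 0}) := measure_union_le _ _
      _ = volume ((C ∩ {q | 0 < ⟪v, q - c⟫}) ∪ (C ∩ {q | ⟪v, q - c⟫ < 0})) := by
          rw [hnull, add_zero]
      _ ≤ volume (C ∩ {q | 0 < ⟪v, q - c⟫}) + volume (C ∩ {q | ⟪v, q - c⟫ < 0}) :=
          measure_union_le _ _
  have hsup : volume (C ∩ {q | 0 < ⟪v, q - c⟫}) + volume (C ∩ {q | ⟪v, q - c⟫ < 0}) ≤ volume C := by
    rw [← measure_union (by
        apply Set.disjoint_left.mpr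
        rintro q ⟨_, h1⟩ ⟨_, h2⟩
        simp only [mem_setOf_eq] at h1 h2
        linarith) (hCm.inter hopen'.measurableSet)]
    exact measure_mono (Set.union_subset inter_subset_left inter_subset_left)
  have heq : volume (C ∩ {q | 0 < ⟪v, q - c⟫}) + volume (C ∩ {q | ⟪v, q - c⟫ < 0}) = volume C :=
    le_antisymm hsup hsub
  rw [← heq, hswap, mul_two]

lemma slab_tendsto {C : Set E2} (hCm : MeasurableSet C) (hCfin : volume C ≠ ⊤)
    (g : E2 → ℝ) (hg : Continuous g) {a : ℝ} (ha : 0 ≤ a) :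
    Filter.Tendsto (fun n : ℕ => volume (C ∩ {q | 0 < g q ∧ g q ≤ a / (n+1)}))
      Filter.atTop (nhds 0) := by
  have hmeas : ∀ n : ℕ, NullMeasurableSet (C ∩ {q | 0 < g q ∧ g q ≤ a / (n+1)}) volume := by
    intro n
    exact (hCm.inter ((measurableSet_lt measurable_const hg.measurable).inter
      (measurableSet_le hg.measurable measurable_const))).nullMeasurableSet
  have hanti : Antitone fun n : ℕ => C ∩ {q | 0 < g q ∧ g q ≤ a / (n+1)} := by
    intro n m hnm
    apply Set.inter_subset_inter_right
    rintro q ⟨h1, h2⟩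
    refine ⟨h1, le_trans h2 ?_⟩
    apply div_le_div_of_nonneg_left ha (by positivity)
    have : (n:ℝ) ≤ m := Nat.cast_le.mpr hnm
    linarith
  have hempty : ⋂ n : ℕ, (C ∩ {q | 0 < g q ∧ g q ≤ a / (n+1)}) = ∅ := by
    ext q
    simp only [Set.mem_iInter, Set.mem_inter_iff, mem_setOf_eq, Set.mem_empty_iff_false,
      iff_false, not_forall]
    by_contra h
    push_neg at h
    obtain ⟨-, h1, -⟩ := h 0
    obtain ⟨n, hn⟩ := exists_nat_gt (a / g q)
    obtain ⟨-, -, h3⟩ := h n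
    rw [le_div_iff₀ (by positivity : (0:ℝ) < (n:ℝ)+1)] at h3
    rw [div_lt_iff₀ h1] at hn
    nlinarith
  have := tendsto_measure_iInter_atTop hmeas hanti ⟨0, by
    exact ne_top_of_le_ne_top hCfin (measure_mono inter_subset_left)⟩
  rw [hempty] at this
  simpa [Function.comp_def] using this

lemma inner_eq_of_dist_eq {q w w' : E2} (h : dist q w = dist q w') :
    ⟪w' - w, q⟫ = ⟪w' - w, w' + w⟫ / 2 := by
  have h1 : ⟪w' - w, (2:ℝ) • q - w' - w⟫ ≤ 0 := (dist_le_dist_iff_inner q w w').mp (le_of_eq h)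
  have h2 : ⟪w - w', (2:ℝ) • q - w - w'⟫ ≤ 0 := (dist_le_dist_iff_inner q w' w).mp (le_of_eq h.symm)
  have he : ⟪w - w', (2:ℝ) • q - w - w'⟫ = -⟪w' - w, (2:ℝ) • q - w' - w⟫ := by
    simp only [inner_sub_left, inner_sub_right, real_inner_smul_right]
    have := real_inner_comm w w'
    ring_nf
  have hI : ⟪w' - w, (2:ℝ) • q - w' - w⟫ = 0 := by linarith
  have hexp : ⟪w' - w, (2:ℝ) • q - w' - w⟫ = 2 * ⟪w' - w, q⟫ - ⟪w' - w, w' + w⟫ := by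
    simp only [inner_sub_right, inner_add_right, real_inner_smul_right]; ring
  rw [hexp] at hI
  linarith

lemma bisector_null {w w' : E2} (hne : w ≠ w') :
    volume {q : E2 | dist q w = dist q w'} = 0 := by
  refine measure_mono_null ?_ (hyperplane_null (w' - w) (sub_ne_zero.mpr (Ne.symm hne))
    (⟪w' - w, w' + w⟫ / 2))
  intro q hq
  exact inner_eq_of_dist_eq hq

set_option maxHeartbeats 1600000 in
/-- Suppose every Voronoi cell of Wilma's placement `W` in a compact convex board
`Q` of positive area is point symmetric about some point. If some site `w` is not
the symmetry center of its own cell, then Barney wins: some `n`-point set `B ⊆ Q`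
claims strictly more than half the area of `Q`. -/
theorem stmt_6 (Q : Set (EuclideanSpace ℝ (Fin 2))) (hQc : IsCompact Q) (hQconv : Convex ℝ Q)
    (hQvol : 0 < volume Q) (n : ℕ)
    (W : Set (EuclideanSpace ℝ (Fin 2))) (hWQ : W ⊆ Q) (hWfin : W.Finite)
    (hWne : W.Nonempty) (hWcard : W.ncard = n)
    (hsym : ∀ w ∈ W, ∃ c, PointSymmetricAbout (cell Q W w) c)
    (hoff : ∃ w ∈ W, ∃ q, q ∈ cell Q W w ∧ (2 : ℝ) • w - q ∉ cell Q W w) :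
    ∃ B : Set (EuclideanSpace ℝ (Fin 2)), B ⊆ Q ∧ B.Finite ∧ B.ncard = n ∧
      volume {q | q ∈ Q ∧ infDist q B < infDist q W} > volume Q / 2 := by
  classical
  have hQclosed : IsClosed Q := hQc.isClosed
  have hQfin : volume Q ≠ ⊤ := hQc.measure_lt_top.ne
  obtain ⟨w₀, hw₀W, q₀, hq₀, hq₀'⟩ := hoff
  choose! c hc using hsym
  have hcellm : ∀ w, MeasurableSet (cell Q W w) := fun w =>
    (isClosed_cell hQclosed W w).measurableSet
  have hcellconv : ∀ w, Convex ℝ (cell Q W w) := fun w => convex_cell hQconv W w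
  have hcellfin : ∀ w, volume (cell Q W w) ≠ ⊤ := fun w =>
    ne_top_of_le_ne_top hQfin (measure_mono (cell_subset Q W w))
  have hcellpos : ∀ w ∈ W, 0 < volume (cell Q W w) := fun w hw =>
    measure_cell_pos hQconv hQvol hWfin (hWQ hw)
  have hintne : ∀ w ∈ W, (interior (cell Q W w)).Nonempty := fun w hw =>
    interior_nonempty_of_measure_pos (hcellconv w) (hcellpos w hw)
  have hcmem : ∀ w ∈ W, c w ∈ interior (cell Q W w) := fun w hw =>
    center_mem_interior (hcellconv w) (hc w hw) (hintne w hw)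
  -- pick an interior point different from the site
  have hxex : ∀ w ∈ W, ∃ x, x ∈ interior (cell Q W w) ∧ x ≠ w := by
    intro w hw
    obtain ⟨z, hz⟩ := hintne w hw
    obtain ⟨ρ, hρ0, hρ⟩ := Metric.isOpen_iff.mp isOpen_interior z hz
    set u : E2 := EuclideanSpace.single (0 : Fin 2) (ρ/2) with hu
    have hun : ‖u‖ = ρ/2 := by
      rw [hu, EuclideanSpace.norm_single, Real.norm_eq_abs, abs_of_pos (by linarith)]
    have hmem1 : z + u ∈ interior (cell Q W w) := by
      apply hρ
      rw [mem_ball, dist_eq_norm, add_sub_cancel_left, hun]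
      linarith
    have hmem2 : z - u ∈ interior (cell Q W w) := by
      apply hρ
      rw [mem_ball, dist_eq_norm, sub_sub_cancel_left, norm_neg, hun]
      linarith
    by_cases h : z + u = w
    · refine ⟨z - u, hmem2, fun h2 => ?_⟩
      have hu0 : u ≠ 0 := by
        intro h0
        rw [h0, norm_zero] at hun
        linarith
      apply hu0
      have h3 : (z + u) - (z - u) = (0:E2) := by rw [h, h2]; abel
      have h4 : (2:ℝ) • u = 0 := by rw [two_smul]; rw [← h3]; abel
      have := congrArg (fun y : E2 => (2:ℝ)⁻¹ • y) h4
      simpa [smul_smul] using this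
    · exact ⟨z + u, hmem1, h⟩
  choose! x hx using hxex
  have hcw₀ : c w₀ ≠ w₀ := by
    intro h
    have h2 := (hc w₀ hw₀W) q₀
    rw [h] at h2
    exact hq₀' (h2.mp hq₀)
  set F : Finset (EuclideanSpace ℝ (Fin 2)) := hWfin.toFinset with hF
  have hmemF : ∀ w : E2, w ∈ F ↔ w ∈ W := fun w => hWfin.mem_toFinset
  have hw₀F : w₀ ∈ F := (hmemF w₀).mpr hw₀W
  obtain ⟨v₀, hv₀def⟩ : ∃ v₀ : E2, v₀ = c w₀ - w₀ := ⟨_, rfl⟩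
  have hv₀ : v₀ ≠ 0 := hv₀def ▸ sub_ne_zero.mpr hcw₀
  have hnv₀2 : 0 < ‖v₀‖^2 := pow_pos (norm_pos_iff.mpr hv₀) 2
  obtain ⟨G, hGdef⟩ : ∃ G : Set E2, G = cell Q W w₀ ∩
    {q | -(‖v₀‖^2/2) < ⟪v₀, q - c w₀⟫ ∧ ⟪v₀, q - c w₀⟫ < 0} := ⟨_, rfl⟩
  obtain ⟨δ, hδdef⟩ : ∃ δ : ℝ≥0∞, δ = volume G := ⟨_, rfl⟩
  have hcont₀ : Continuous fun q : E2 => (⟪v₀, q - c w₀⟫ : ℝ) :=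
    continuous_const.inner (continuous_id.sub continuous_const)
  have hGmeas : MeasurableSet G := by
    rw [hGdef, Set.setOf_and]
    exact (hcellm w₀).inter ((measurableSet_lt measurable_const hcont₀.measurable).inter
      (measurableSet_lt hcont₀.measurable measurable_const))
  have hδpos : 0 < δ := by
    obtain ⟨U, hU⟩ : ∃ U : Set E2, U = interior (cell Q W w₀) ∩
      {q | -(‖v₀‖^2/2) < ⟪v₀, q - c w₀⟫ ∧ ⟪v₀, q - c w₀⟫ < 0} := ⟨_, rfl⟩
    have hUopen : IsOpen U := by
      rw [hU, Set.setOf_and]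
      exact isOpen_interior.inter ((isOpen_lt continuous_const hcont₀).inter
        (isOpen_lt hcont₀ continuous_const))
    have hUne : U.Nonempty := by
      rw [hU]
      obtain ⟨ρ, hρ0, hρ⟩ := Metric.isOpen_iff.mp isOpen_interior _ (hcmem w₀ hw₀W)
      have hnv : 0 < ‖v₀‖ := norm_pos_iff.mpr hv₀
      set τ : ℝ := min (1/4) (ρ / (2 * ‖v₀‖)) with hτ
      have hτ0 : 0 < τ := lt_min (by norm_num) (by positivity)
      have hτ4 : τ ≤ 1/4 := min_le_left _ _
      have hτρ : τ * ‖v₀‖ < ρ := by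
        have h1 : τ ≤ ρ / (2 * ‖v₀‖) := min_le_right _ _
        have h2 : τ * ‖v₀‖ ≤ (ρ / (2*‖v₀‖)) * ‖v₀‖ := mul_le_mul_of_nonneg_right h1 (le_of_lt hnv)
        have h3 : (ρ / (2*‖v₀‖)) * ‖v₀‖ = ρ/2 := by field_simp
        linarith
      have hinner : ⟪v₀, (c w₀ - τ • v₀) - c w₀⟫ = -(τ * ‖v₀‖^2) := by
        have h1 : (c w₀ - τ • v₀) - c w₀ = -(τ • v₀) := by abel
        rw [h1, inner_neg_right, real_inner_smul_right, real_inner_self_eq_norm_sq]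
      refine ⟨c w₀ - τ • v₀, hρ ?_, ?_, ?_⟩
      · rw [mem_ball, dist_eq_norm, sub_sub_cancel_left, norm_neg, norm_smul, Real.norm_eq_abs,
          abs_of_pos hτ0]
        exact hτρ
      · show -(‖v₀‖^2/2) < ⟪v₀, (c w₀ - τ • v₀) - c w₀⟫
        rw [hinner]; nlinarith [mul_pos hτ0 hnv₀2]
      · show ⟪v₀, (c w₀ - τ • v₀) - c w₀⟫ < 0
        rw [hinner]; nlinarith [mul_pos hτ0 hnv₀2]
    rw [hδdef, hGdef]
    calc (0:ℝ≥0∞) < volume U := hUopen.measure_pos volume hUne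
      _ ≤ _ := by
          rw [hU]
          exact measure_mono (Set.inter_subset_inter_left _ interior_subset)
  have hδfin : δ ≠ ⊤ := by
    rw [hδdef, hGdef]
    exact ne_top_of_le_ne_top (hcellfin w₀) (measure_mono Set.inter_subset_left)
  -- Barney's points
  obtain ⟨b, hb⟩ : ∃ b : ℕ → E2 → E2, ∀ (m : ℕ) (w : E2),
      b m w = if c w = w then w + ((1:ℝ)/(m+1)) • (x w - w) else c w :=
    ⟨_, fun m w => rfl⟩
  have hbmem : ∀ m : ℕ, ∀ w ∈ W, b m w ∈ interior (cell Q W w) := by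
    intro m w hw
    rw [hb]
    by_cases hcw : c w = w
    · rw [if_pos hcw]
      have ht0 : 0 < (1:ℝ)/(m+1) := by positivity
      have ht1 : (1:ℝ)/(m+1) ≤ 1 := by
        rw [div_le_one (by positivity)]
        have : (0:ℝ) ≤ (m:ℝ) := Nat.cast_nonneg m
        linarith
      have hco : w + ((1:ℝ)/(m+1)) • (x w - w)
          = (1 - (1:ℝ)/(m+1)) • w + ((1:ℝ)/(m+1)) • (x w) := by module
      rcases lt_or_eq_of_le ht1 with hlt | heq1
      · rw [hco]
        exact (hcellconv w).openSegment_self_interior_subset_interior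
          (mem_cell_self hWQ hw) (hx w hw).1
          ⟨1 - (1:ℝ)/(m+1), (1:ℝ)/(m+1), by linarith, ht0, by ring, rfl⟩
      · rw [hco, heq1]
        simpa using (hx w hw).1
    · rw [if_neg hcw]
      exact hcmem w hw
  have hbQ : ∀ m : ℕ, ∀ w ∈ W, b m w ∈ Q := fun m w hw =>
    cell_subset Q W w (interior_subset (hbmem m w hw))
  have hbinj : ∀ m : ℕ, Set.InjOn (b m) W := by
    intro m w hw w' hw' heq
    exact eq_of_mem_interior_cells hw hw' (hbmem m w hw) (heq ▸ hbmem m w' hw')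
  -- claim and slab sets
  obtain ⟨K, hKdef⟩ : ∃ K : ℕ → E2 → Set E2, ∀ (m : ℕ) (w : E2),
      K m w = cell Q W w ∩ {q | dist q (b m w) < dist q w} := ⟨_, fun m w => rfl⟩
  obtain ⟨Sl, hSldef⟩ : ∃ Sl : ℕ → E2 → Set E2, ∀ (m : ℕ) (w : E2),
      Sl m w = if c w = w then cell Q W w ∩ {q | 0 < ⟪x w - w, q - w⟫ ∧
        ⟪x w - w, q - w⟫ ≤ (‖x w - w‖^2/2)/(m+1)} else ∅ := ⟨_, fun m w => rfl⟩
  -- generic expansion of the claim condition when the site is replaced by c w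
  have hexpc : ∀ w q : E2, ⟪c w - w, (2:ℝ) • q - c w - w⟫
      = 2 * ⟪c w - w, q - c w⟫ + ‖c w - w‖^2 := by
    intro w q
    have h2 : (2:ℝ) • q - c w - w = (2:ℝ) • (q - c w) + (c w - w) := by module
    rw [h2, inner_add_right, real_inner_smul_right, real_inner_self_eq_norm_sq]
    try ring
  -- per-cell lower bounds
  have key1 : ∀ m : ℕ, ∀ w ∈ W,
      volume (cell Q W w) ≤ (volume (K m w) + volume (Sl m w)) * 2 := by
    intro m w hw
    by_cases hcw : c w = w
    · -- centered cell
      have hvne : x w - w ≠ 0 := sub_ne_zero.mpr (hx w hw).2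
      have hsymw : PointSymmetricAbout (cell Q W w) w := by
        have h5 := hc w hw
        rw [hcw] at h5
        exact h5
      have hhalf := half_measure (hcellm w) (hcellfin w) hvne hsymw
      have hsubset : cell Q W w ∩ {q | 0 < ⟪x w - w, q - w⟫} ⊆ K m w ∪ Sl m w := by
        rintro q ⟨hq1, hq2⟩
        rw [Set.mem_setOf_eq] at hq2
        by_cases hcase : ⟪x w - w, q - w⟫ ≤ (‖x w - w‖^2/2)/(m+1)
        · right
          rw [hSldef, if_pos hcw]
          exact ⟨hq1, hq2, hcase⟩
        · left
          rw [hKdef]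
          refine ⟨hq1, ?_⟩
          rw [Set.mem_setOf_eq, dist_lt_dist_iff_inner]
          push_neg at hcase
          have hbw : b m w = w + ((1:ℝ)/(m+1)) • (x w - w) := by rw [hb, if_pos hcw]
          have hexp : ⟪b m w - w, (2:ℝ) • q - b m w - w⟫
              = ((1:ℝ)/(m+1)) * (2 * ⟪x w - w, q - w⟫ - ((1:ℝ)/(m+1)) * ‖x w - w‖^2) := by
            rw [hbw]
            have h1 : (w + ((1:ℝ)/(m+1)) • (x w - w)) - w = ((1:ℝ)/(m+1)) • (x w - w) := by
              abel
            have h2 : (2:ℝ) • q - (w + ((1:ℝ)/(m+1)) • (x w - w)) - w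
                = (2:ℝ) • (q - w) - ((1:ℝ)/(m+1)) • (x w - w) := by module
            rw [h1, h2, real_inner_smul_left, inner_sub_right, real_inner_smul_right,
              real_inner_smul_right, real_inner_self_eq_norm_sq]
            try ring
          rw [hexp]
          have ht0 : 0 < (1:ℝ)/(m+1) := by positivity
          have hgt : (‖x w - w‖^2/2) * ((1:ℝ)/(m+1)) < ⟪x w - w, q - w⟫ := by
            have heq2 : (‖x w - w‖^2/2)/(m+1) = (‖x w - w‖^2/2) * ((1:ℝ)/(m+1)) := by ring
            rw [heq2] at hcase
            exact hcase
          nlinarith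
      calc volume (cell Q W w)
          = volume (cell Q W w ∩ {q | 0 < ⟪x w - w, q - w⟫}) * 2 := hhalf.symm
        _ ≤ volume (K m w ∪ Sl m w) * 2 := mul_le_mul_left (measure_mono hsubset) 2
        _ ≤ (volume (K m w) + volume (Sl m w)) * 2 :=
            mul_le_mul_left (measure_union_le _ _) 2
    · -- off-center cell
      have hvne : c w - w ≠ 0 := sub_ne_zero.mpr hcw
      have hhalf := half_measure (hcellm w) (hcellfin w) hvne (hc w hw)
      have hsubset : cell Q W w ∩ {q | 0 < ⟪c w - w, q - c w⟫} ⊆ K m w := by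
        rintro q ⟨hq1, hq2⟩
        rw [Set.mem_setOf_eq] at hq2
        rw [hKdef]
        refine ⟨hq1, ?_⟩
        rw [Set.mem_setOf_eq, dist_lt_dist_iff_inner, hb, if_neg hcw, hexpc w q]
        have : 0 < ‖c w - w‖^2 := pow_pos (norm_pos_iff.mpr hvne) 2
        nlinarith
      calc volume (cell Q W w)
          = volume (cell Q W w ∩ {q | 0 < ⟪c w - w, q - c w⟫}) * 2 := hhalf.symm
        _ ≤ volume (K m w) * 2 := mul_le_mul_left (measure_mono hsubset) 2
        _ ≤ (volume (K m w) + volume (Sl m w)) * 2 := mul_le_mul_left le_self_add 2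
  -- strict bound at w₀
  have key2 : ∀ m : ℕ, volume (cell Q W w₀) + δ * 2 ≤ volume (K m w₀) * 2 := by
    intro m
    have hhalf := half_measure (hcellm w₀) (hcellfin w₀) hv₀ (hc w₀ hw₀W)
    have hbw : b m w₀ = c w₀ := by rw [hb, if_neg hcw₀]
    have hexp0 : ∀ q : E2, ⟪c w₀ - w₀, (2:ℝ) • q - c w₀ - w₀⟫
        = 2 * ⟪v₀, q - c w₀⟫ + ‖v₀‖^2 := by
      intro q
      rw [hv₀def]
      exact hexpc w₀ q
    have hAK : cell Q W w₀ ∩ {q | 0 < ⟪v₀, q - c w₀⟫} ⊆ K m w₀ := by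
      rintro q ⟨hq1, hq2⟩
      rw [Set.mem_setOf_eq] at hq2
      rw [hKdef]
      refine ⟨hq1, ?_⟩
      rw [Set.mem_setOf_eq, dist_lt_dist_iff_inner, hbw, hexp0 q]
      nlinarith
    have hGK : G ⊆ K m w₀ := by
      intro q hq
      rw [hGdef] at hq
      obtain ⟨hq1, hq2, hq3⟩ := hq
      rw [hKdef]
      refine ⟨hq1, ?_⟩
      rw [Set.mem_setOf_eq, dist_lt_dist_iff_inner, hbw, hexp0 q]
      nlinarith
    have hdisjAG : Disjoint (cell Q W w₀ ∩ {q | 0 < ⟪v₀, q - c w₀⟫}) G := by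
      rw [hGdef]
      apply Set.disjoint_left.mpr
      rintro q ⟨_, h1⟩ ⟨_, _, h3⟩
      rw [Set.mem_setOf_eq] at h1
      linarith
    have hsum : volume (cell Q W w₀ ∩ {q | 0 < ⟪v₀, q - c w₀⟫}) + δ ≤ volume (K m w₀) := by
      rw [hδdef, ← measure_union hdisjAG hGmeas]
      exact measure_mono (Set.union_subset hAK hGK)
    calc volume (cell Q W w₀) + δ * 2
        = (volume (cell Q W w₀ ∩ {q | 0 < ⟪v₀, q - c w₀⟫}) + δ) * 2 := by
          rw [add_mul, hhalf]
      _ ≤ volume (K m w₀) * 2 := mul_le_mul_left hsum 2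
  -- choose m so that total slab measure is < δ
  have htend : Filter.Tendsto (fun m : ℕ => ∑ w ∈ F, volume (Sl m w))
      Filter.atTop (nhds 0) := by
    have hterm : ∀ w ∈ F, Filter.Tendsto (fun m : ℕ => volume (Sl m w))
        Filter.atTop (nhds 0) := by
      intro w hwF
      by_cases hcw : c w = w
      · have hrw : (fun m : ℕ => volume (Sl m w)) = fun m : ℕ =>
            volume (cell Q W w ∩ {q | 0 < ⟪x w - w, q - w⟫ ∧
              ⟪x w - w, q - w⟫ ≤ (‖x w - w‖^2/2)/(m+1)}) := by
          funext m
          rw [hSldef, if_pos hcw]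
        rw [hrw]
        exact slab_tendsto (hcellm w) (hcellfin w)
          (fun q => ⟪x w - w, q - w⟫)
          (continuous_const.inner (continuous_id.sub continuous_const))
          (by positivity)
      · have hrw : (fun m : ℕ => volume (Sl m w)) = fun m : ℕ => 0 := by
          funext m
          rw [hSldef, if_neg hcw, measure_empty]
        rw [hrw]
        exact tendsto_const_nhds
    have := tendsto_finset_sum F hterm
    simpa using this
  have hev : ∀ᶠ m : ℕ in Filter.atTop, ∑ w ∈ F, volume (Sl m w) < δ :=
    htend.eventually_lt_const hδpos
  obtain ⟨m, hm⟩ := hev.exists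
  -- final assembly
  refine ⟨b m '' W, ?_, hWfin.image _, ?_, ?_⟩
  · rintro _ ⟨w, hw, rfl⟩
    exact hbQ m w hw
  · rw [Set.ncard_image_of_injOn (hbinj m), hWcard]
  · have hKsub : ∀ w ∈ W, K m w ⊆ {q | q ∈ Q ∧ infDist q (b m '' W) < infDist q W} := by
      intro w hw q hq
      rw [hKdef] at hq
      obtain ⟨hq1, hq2⟩ := hq
      rw [Set.mem_setOf_eq] at hq2
      refine ⟨hq1.1, ?_⟩
      have h1 : infDist q W = dist q w := infDist_eq_of_mem_cell hWne hw hq1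
      have h2 : infDist q (b m '' W) ≤ dist q (b m w) :=
        infDist_le_dist_of_mem ⟨w, hw, rfl⟩
      rw [h1]
      exact lt_of_le_of_lt h2 hq2
    have hKmeas : ∀ w ∈ F, MeasurableSet (K m w) := by
      intro w _
      rw [hKdef]
      exact (hcellm w).inter (isOpen_lt (continuous_id.dist continuous_const)
        (continuous_id.dist continuous_const)).measurableSet
    have hdisj : (F : Set (EuclideanSpace ℝ (Fin 2))).Pairwise
        (Function.onFun (MeasureTheory.AEDisjoint volume) (K m)) := by
      intro w hw w' hw' hne
      have hsub2 : K m w ∩ K m w' ⊆ {q : E2 | dist q w = dist q w'} := by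
        rintro q ⟨hqa, hqb⟩
        rw [hKdef] at hqa hqb
        exact le_antisymm (hqa.1.2 w' ((hmemF w').mp hw')) (hqb.1.2 w ((hmemF w).mp hw))
      exact measure_mono_null hsub2 (bisector_null hne)
    have hunion : volume (⋃ w ∈ F, K m w) = ∑ w ∈ F, volume (K m w) :=
      measure_biUnion_finset₀ hdisj (fun w hw => (hKmeas w hw).nullMeasurableSet)
    have hQle : volume Q ≤ ∑ w ∈ F, volume (cell Q W w) := by
      calc volume Q ≤ volume (⋃ w ∈ F, cell Q W w) := by
            apply measure_mono
            intro q hq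
            obtain ⟨w, hwmem⟩ := Set.mem_iUnion₂.mp (cover_cells hWfin hWne hq)
            exact Set.mem_iUnion₂.mpr ⟨w, (hmemF w).mpr hwmem.1, hwmem.2⟩
        _ ≤ ∑ w ∈ F, volume (cell Q W w) := measure_biUnion_finset_le F _
    have hsum2 : ∑ w ∈ F, volume (cell Q W w) + δ * 2
        ≤ (∑ w ∈ F, volume (K m w) + ∑ w ∈ F, volume (Sl m w)) * 2 := by
      have hper : ∀ w ∈ F, volume (cell Q W w) + (if w = w₀ then δ * 2 else 0)
          ≤ (volume (K m w) + volume (Sl m w)) * 2 := by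
        intro w hwF
        by_cases hww : w = w₀
        · subst hww
          simp only [if_pos rfl]
          calc volume (cell Q W w) + δ * 2 ≤ volume (K m w) * 2 := key2 m
            _ ≤ (volume (K m w) + volume (Sl m w)) * 2 := mul_le_mul_left le_self_add 2
        · simp only [if_neg hww, add_zero]
          exact key1 m w ((hmemF w).mp hwF)
      calc ∑ w ∈ F, volume (cell Q W w) + δ * 2
          = ∑ w ∈ F, (volume (cell Q W w) + (if w = w₀ then δ * 2 else 0)) := by
            rw [Finset.sum_add_distrib, Finset.sum_ite_eq' F w₀ (fun _ => δ * 2),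
              if_pos hw₀F]
        _ ≤ ∑ w ∈ F, (volume (K m w) + volume (Sl m w)) * 2 := Finset.sum_le_sum hper
        _ = (∑ w ∈ F, volume (K m w) + ∑ w ∈ F, volume (Sl m w)) * 2 := by
            rw [← Finset.sum_add_distrib, Finset.sum_mul]
    have hSfin : ∑ w ∈ F, volume (K m w) ≠ ⊤ := by
      rw [← hunion]
      refine ne_top_of_le_ne_top hQfin (measure_mono ?_)
      refine Set.iUnion₂_subset fun w _ => ?_
      rw [hKdef]
      exact Set.inter_subset_left.trans (cell_subset Q W w)
    have hδ2fin : δ * 2 ≠ ⊤ := ENNReal.mul_ne_top hδfin (by norm_num)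
    have hstrict : volume Q < (∑ w ∈ F, volume (K m w)) * 2 := by
      have h1 : volume Q + δ * 2
          ≤ (∑ w ∈ F, volume (K m w)) * 2 + (∑ w ∈ F, volume (Sl m w)) * 2 := by
        calc volume Q + δ * 2 ≤ ∑ w ∈ F, volume (cell Q W w) + δ * 2 :=
              add_le_add_left hQle _
          _ ≤ (∑ w ∈ F, volume (K m w) + ∑ w ∈ F, volume (Sl m w)) * 2 := hsum2
          _ = (∑ w ∈ F, volume (K m w)) * 2 + (∑ w ∈ F, volume (Sl m w)) * 2 := by
              rw [add_mul]
      have h2 : (∑ w ∈ F, volume (Sl m w)) * 2 < δ * 2 :=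
        ENNReal.mul_lt_mul_left two_ne_zero ENNReal.ofNat_ne_top hm
      have hS2fin : (∑ w ∈ F, volume (K m w)) * 2 ≠ ⊤ := ENNReal.mul_ne_top hSfin (by norm_num)
      have h3 : volume Q + δ * 2 < (∑ w ∈ F, volume (K m w)) * 2 + δ * 2 :=
        lt_of_le_of_lt h1 (ENNReal.add_lt_add_left hS2fin h2)
      exact (ENNReal.add_lt_add_iff_right hδ2fin).mp h3
    have hfinal : volume Q / 2 < ∑ w ∈ F, volume (K m w) := by
      rw [ENNReal.div_lt_iff (Or.inl two_ne_zero) (Or.inl ENNReal.ofNat_ne_top)]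
      exact hstrict
    refine lt_of_lt_of_le hfinal ?_
    rw [← hunion]
    apply measure_mono
    exact Set.iUnion₂_subset fun w hw => hKsub w ((hmemF w).mp hw)
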